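/- Let V be a finite-dimensional complex vector space with a nondegenerate symmetric bilinear form (·,·) and basis x₁,…,x_s with (x_i,x_i) = 2 for each i. Let T_i = 1 − x_i (x_i, ·) be the orthogonal reflection in x_i. Then, identifying endomorphisms of V with matrices in the basis (x_i), the product of reflections satisfies T_s ⋯ T₁ = −u₋⁻¹ u₊, where u₊ (resp. u₋) is the strictly upper (resp. lower) unipotent-triangular matrix such that u₊ + u₋ equals the Gram matrix [(x_i, x_j)]. -/

import Mathlib

private def myIter7 {V : Type} [AddCommGroup V] [Module ℂ V] (s : ℕ)
    (T : Fin s → Module.End ℂ V) (v : V) : ℕ → V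
  | 0 => v
  | (k+1) => if h : k < s then T ⟨k, h⟩ (myIter7 s T v k) else myIter7 s T v k

private lemma myIter7_prod {V : Type} [AddCommGroup V] [Module ℂ V] :
    ∀ (s : ℕ) (T : Fin s → Module.End ℂ V) (v : V),
      (List.ofFn T).reverse.prod v = myIter7 s T v s := by
  intro s
  induction s with
  | zero => intro T v; simp [myIter7]
  | succ n ih =>
    intro T v
    have h1 : List.ofFn T = T 0 :: List.ofFn (fun i : Fin n => T i.succ) := by
      simp [List.ofFn_succ]
    rw [h1]
    have h2 : (T 0 :: List.ofFn fun i : Fin n => T i.succ).reverse.prod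
        = (List.ofFn fun i : Fin n => T i.succ).reverse.prod * T 0 := by
      simp
    rw [h2, Module.End.mul_apply, ih]
    have key : ∀ k, k ≤ n → myIter7 n (fun i : Fin n => T i.succ) (T 0 v) k
        = myIter7 (n+1) T v (k+1) := by
      intro k
      induction k with
      | zero => intro _; simp [myIter7]
      | succ m ihm =>
        intro hm
        have hm' : m ≤ n := Nat.le_of_succ_le hm
        have hmn : m < n := hm
        simp only [myIter7, dif_pos hmn, dif_pos (Nat.succ_lt_succ hmn), ihm hm']
        rfl
    exact key n le_rfl

/-- For a basis `x₁,…,x_s` of a complex vector space with nondegenerate symmetric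
bilinear form, with `(x_i,x_i) = 2`, the product of the orthogonal reflections
`T_i = 1 − x_i(x_i,·)` satisfies `T_s ⋯ T₁ = −u₋⁻¹ u₊` in the basis `(x_i)`, where
`u₊` (resp. `u₋`) is upper (resp. lower) triangular unipotent with
`u₊ + u₋ = Gram matrix`. -/
theorem stmt_7 (s : ℕ) (V : Type) [AddCommGroup V] [Module ℂ V] [FiniteDimensional ℂ V]
    (B : LinearMap.BilinForm ℂ V) (hsymm : ∀ u v, B u v = B v u)
    (hnd : B.Nondegenerate)
    (x : Module.Basis (Fin s) ℂ V) (hx : ∀ i, B (x i) (x i) = 2)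
    (T : Fin s → Module.End ℂ V) (hT : ∀ i v, T i v = v - (B (x i) v) • x i)
    (up lo : Matrix (Fin s) (Fin s) ℂ)
    (hup0 : ∀ i j : Fin s, j < i → up i j = 0) (hup1 : ∀ i, up i i = 1)
    (hlo0 : ∀ i j : Fin s, i < j → lo i j = 0) (hlo1 : ∀ i, lo i i = 1)
    (hGram : up + lo = Matrix.of fun i j => B (x i) (x j)) :
    LinearMap.toMatrix x x ((List.ofFn T).reverse.prod) = -(lo⁻¹ * up) := by
  classical
  set M := LinearMap.toMatrix x x ((List.ofFn T).reverse.prod) with hMdef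
  have hdet : lo.det = 1 := by
    rw [Matrix.det_of_lowerTriangular lo (fun i j h => hlo0 i j h)]
    simp [hlo1]
  have hunit : IsUnit lo.det := by rw [hdet]; exact isUnit_one
  have hkey : lo * M = -up := by
    ext i j
    -- set up the recursion for column j
    set y : ℕ → V := myIter7 s T (x j) with hy
    set c : Fin s → ℂ := fun i => B (x i) (y i.val) with hc
    -- Claim A
    have claimA : ∀ k : ℕ, y k = x j
        - ∑ m ∈ Finset.univ.filter (fun m : Fin s => (m : ℕ) < k), c m • x m := by
      intro k
      induction k with
      | zero => simp [hy, myIter7]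
      | succ k ihk =>
        by_cases h : k < s
        · have hstep : y (k+1) = T ⟨k, h⟩ (y k) := by
            rw [hy]; simp [myIter7, dif_pos h]
          have hmem : (⟨k, h⟩ : Fin s) ∉
              Finset.univ.filter (fun m : Fin s => (m : ℕ) < k) := by
            simp
          have hfilter : Finset.univ.filter (fun m : Fin s => (m : ℕ) < k + 1)
              = insert (⟨k, h⟩ : Fin s)
                (Finset.univ.filter (fun m : Fin s => (m : ℕ) < k)) := by
            ext m
            simp only [Finset.mem_filter, Finset.mem_univ, true_and,
              Finset.mem_insert, Nat.lt_succ_iff_lt_or_eq]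
            constructor
            · rintro (h1 | h1)
              · exact Or.inr h1
              · exact Or.inl (Fin.ext h1)
            · rintro (h1 | h1)
              · exact Or.inr (by rw [h1])
              · exact Or.inl h1
          have hcval : c ⟨k, h⟩ = B (x ⟨k, h⟩) (y k) := rfl
          rw [hstep, hT, ← hcval, ihk, hfilter, Finset.sum_insert hmem]
          have : c ⟨k, h⟩ • x ⟨k, h⟩ +
              ∑ m ∈ Finset.univ.filter (fun m : Fin s => (m : ℕ) < k), c m • x m
              = (∑ m ∈ Finset.univ.filter (fun m : Fin s => (m : ℕ) < k), c m • x m)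
                + c ⟨k, h⟩ • x ⟨k, h⟩ := add_comm _ _
          rw [this]
          abel
        · have hstep : y (k+1) = y k := by
            rw [hy]; simp [myIter7, dif_neg h]
          have hfilter : Finset.univ.filter (fun m : Fin s => (m : ℕ) < k + 1)
              = Finset.univ.filter (fun m : Fin s => (m : ℕ) < k) := by
            apply Finset.filter_congr
            intro m _
            have hms : (m : ℕ) < s := m.isLt
            have hks : s ≤ k := Nat.le_of_not_lt h
            simp [Nat.lt_of_lt_of_le hms hks, Nat.lt_of_lt_of_le hms (Nat.le_succ_of_le hks)]
          rw [hstep, ihk, hfilter]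
    -- Claim B
    have claimB : ∀ i : Fin s, ∑ m, lo i m * c m = B (x i) (x j) := by
      intro i
      have hci : c i = B (x i) (x j)
          - ∑ m ∈ Finset.univ.filter (fun m : Fin s => (m : ℕ) < (i : ℕ)),
              lo i m * c m := by
        have := claimA (i : ℕ)
        rw [hc]
        simp only [this, map_sub, map_sum, map_smul, smul_eq_mul]
        congr 1
        apply Finset.sum_congr rfl
        intro m hm
        have hmi : m < i := by
          simpa using (Finset.mem_filter.mp hm).2
        have hBim : B (x i) (x m) = lo i m := by
          have := congrFun (congrFun hGram i) m
          simp only [Matrix.add_apply, Matrix.of_apply] at this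
          rw [← this, hup0 i m hmi, zero_add]
        rw [hBim]; ring
      have hsplit : ∑ m, lo i m * c m
          = ∑ m ∈ Finset.univ.filter (fun m : Fin s => (m : ℕ) ≤ (i : ℕ)),
              lo i m * c m := by
        symm
        apply Finset.sum_subset (Finset.filter_subset _ _)
        intro m _ hm
        have : ¬ ((m : ℕ) ≤ (i : ℕ)) := by simpa using hm
        have him : i < m := by
          rw [Fin.lt_def]; omega
        rw [hlo0 i m him, zero_mul]
      have hins : Finset.univ.filter (fun m : Fin s => (m : ℕ) ≤ (i : ℕ))
          = insert i (Finset.univ.filter (fun m : Fin s => (m : ℕ) < (i : ℕ))) := by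
        ext m
        simp only [Finset.mem_filter, Finset.mem_univ, true_and, Finset.mem_insert]
        constructor
        · intro h1
          rcases Nat.lt_or_ge (m : ℕ) (i : ℕ) with h2 | h2
          · exact Or.inr h2
          · exact Or.inl (Fin.ext (le_antisymm h1 h2))
        · rintro (h1 | h1)
          · rw [h1]
          · exact Nat.le_of_lt h1
      have hnotmem : i ∉ Finset.univ.filter (fun m : Fin s => (m : ℕ) < (i : ℕ)) := by
        simp
      rw [hsplit, hins, Finset.sum_insert hnotmem, hlo1, one_mul, hci]
      ring
    -- Claim C : entries of M
    have claimC : ∀ k : Fin s, M k j = (if k = j then 1 else 0) - c k := by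
      intro k
      have hfil : Finset.univ.filter (fun m : Fin s => (m : ℕ) < s) = Finset.univ := by
        apply Finset.filter_true_of_mem
        intro m _; exact m.isLt
      rw [hMdef, LinearMap.toMatrix_apply, myIter7_prod, ← hy, claimA s, hfil]
      simp only [map_sub, map_sum, map_smul, Finsupp.coe_sub, Finsupp.coe_finset_sum,
        Pi.sub_apply, Finset.sum_apply, Finsupp.coe_smul, Pi.smul_apply, smul_eq_mul,
        Module.Basis.repr_self]
      rw [Finsupp.single_apply]
      congr 1
      · exact if_congr (by constructor <;> intro h <;> exact h.symm) rfl rfl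
      · rw [Finset.sum_eq_single k]
        · rw [Finsupp.single_apply, if_pos rfl, mul_one]
        · intro m _ hmk
          rw [Finsupp.single_apply, if_neg hmk, mul_zero]
        · intro h; exact absurd (Finset.mem_univ k) h
    -- finish the entry computation
    have hGij : up i j + lo i j = B (x i) (x j) := by
      have := congrFun (congrFun hGram i) j
      simpa using this
    rw [Matrix.mul_apply]
    simp only [claimC]
    rw [Finset.sum_congr rfl (fun k _ => mul_sub (lo i k) _ _), Finset.sum_sub_distrib]
    have h1 : ∑ k, lo i k * (if k = j then 1 else 0) = lo i j := by
      rw [Finset.sum_eq_single j]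
      · rw [if_pos rfl, mul_one]
      · intro m _ hmj; rw [if_neg hmj, mul_zero]
      · intro h; exact absurd (Finset.mem_univ j) h
    rw [h1, claimB i, ← hGij, Matrix.neg_apply]
    ring
  calc M = (lo⁻¹ * lo) * M := by rw [Matrix.nonsing_inv_mul lo hunit, one_mul]
    _ = lo⁻¹ * (lo * M) := by rw [Matrix.mul_assoc]
    _ = -(lo⁻¹ * up) := by rw [hkey, Matrix.mul_neg]
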